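/- Let m be a positive integer, let J, K ⊆ {0,1,…,m−1} with |J| = |K|, and let A be a finite set of nonnegative integers such that the sumset K ⊕ A contains exactly one representative from each congruence class modulo m (i.e., for every r ∈ {0,1,…,m−1} there is exactly one pair (k,a) ∈ K × A with k + a ≡ r mod m). If for every s ∈ P_m(J)\{1} the cyclotomic polynomial Φ_s(z) fails to divide the polynomial A(z) = ∑_{a∈A} z^a, then H_{J,K,m} is a Hadamard submatrix of the Fourier matrix F_m. -/

import Mathlib

open Finset

/-- The difference set `D(X) = {x₁ - x₂ : x₁, x₂ ∈ X}` of a finite set of naturals. -/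
def diffSet (X : Finset ℕ) : Finset ℤ :=
  (X ×ˢ X).image fun q => (q.1 : ℤ) - (q.2 : ℤ)

/-- The `m`-th primitive set `P_m(X) = {m / gcd(m,d) : d ∈ D(X)}`. -/
def primSet (m : ℕ) (X : Finset ℕ) : Finset ℕ :=
  (diffSet X).image fun d => m / Nat.gcd m d.natAbs

/-- `H_{J,K,m}` is a Hadamard submatrix of the Fourier matrix `F_m`:
for all distinct `j₁ j₂ ∈ J`, `∑_{k ∈ K} e^{2πi(j₁-j₂)k/m} = 0`. -/
def IsHadamardSub (m : ℕ) (J K : Finset ℕ) : Prop :=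
  ∀ j₁ ∈ J, ∀ j₂ ∈ J, j₁ ≠ j₂ →
    ∑ k ∈ K, Complex.exp (2 * Real.pi * Complex.I * ((j₁ : ℂ) - (j₂ : ℂ)) * (k : ℂ) / (m : ℂ)) = 0

/-- `ν_p^max` of a finite set of naturals. -/
noncomputable def nuMaxN (p : ℕ) (S : Finset ℕ) : ℕ := S.sup fun n => padicValNat p n

/-- `ν_p^min` of a finite set of naturals (0 for the empty set). -/
noncomputable def nuMinN (p : ℕ) (S : Finset ℕ) : ℕ :=
  if h : S.Nonempty then S.inf' h fun n => padicValNat p n else 0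

/-- `ν_p^max` of a finite set of integers. -/
noncomputable def nuMaxI (p : ℕ) (S : Finset ℤ) : ℕ := S.sup fun d => padicValInt p d

/-- `ν_p^min` of a finite set of integers (0 for the empty set). -/
noncomputable def nuMinI (p : ℕ) (S : Finset ℤ) : ℕ :=
  if h : S.Nonempty then S.inf' h fun d => padicValInt p d else 0

/-- `C_m(X) = ∏_{s ∈ P_m(X) \ {1}} Φ_s(1)`. -/
noncomputable def Cm (m : ℕ) (X : Finset ℕ) : ℤ :=
  ∏ s ∈ (primSet m X).erase 1, (Polynomial.cyclotomic s ℤ).eval 1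

open Polynomial in

lemma key_sum (m : ℕ) (hm : 0 < m) (J K : Finset ℕ)
    (hJ : J ⊆ Finset.range m)
    (A : Finset ℕ)
    (hA : ∀ r ∈ Finset.range m, ((K ×ˢ A).filter fun q => (q.1 + q.2) % m = r).card = 1)
    (hdvd : ∀ s ∈ (primSet m J).erase 1,
      ¬ (Polynomial.cyclotomic s ℤ ∣ ∑ a ∈ A, Polynomial.X ^ a))
    (j₁ j₂ : ℕ) (h₁ : j₁ ∈ J) (h₂ : j₂ ∈ J) (hlt : j₂ < j₁) :
    ∑ k ∈ K, Complex.exp (2 * Real.pi * Complex.I * ((j₁ : ℂ) - (j₂ : ℂ)) * (k : ℂ) / (m : ℂ)) = 0 := by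
  have hj₁m : j₁ < m := Finset.mem_range.mp (hJ h₁)
  set e : ℕ := j₁ - j₂ with he_def
  have he : 0 < e := Nat.sub_pos_of_lt hlt
  have hem : e < m := lt_of_le_of_lt (Nat.sub_le _ _) hj₁m
  set g : ℕ := Nat.gcd m e with hg_def
  have hg : 0 < g := Nat.gcd_pos_of_pos_left _ hm
  set s : ℕ := m / g with hs_def
  have hgm : g ∣ m := Nat.gcd_dvd_left _ _
  have hs0 : 0 < s := Nat.div_pos (Nat.le_of_dvd hm hgm) hg
  have hs1 : s ≠ 1 := by
    intro h
    have h3 : s * g = m := Nat.div_mul_cancel hgm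
    have h4 : g ≤ e := Nat.le_of_dvd he (Nat.gcd_dvd_right _ _)
    rw [h, one_mul] at h3
    omega
  have hcop : (e / g).Coprime s := (Nat.coprime_div_gcd_div_gcd hg).symm
  set ζ : ℂ := Complex.exp (2 * Real.pi * Complex.I * ((e / g : ℕ) / (s : ℂ))) with hζ_def
  clear_value e g s ζ
  have hζ : IsPrimitiveRoot ζ s := hζ_def ▸ Complex.isPrimitiveRoot_exp_of_coprime _ _ hs0.ne' hcop
  -- exponent identity
  have hcast : ∀ k : ℕ, Complex.exp (2 * Real.pi * Complex.I * ((j₁ : ℂ) - (j₂ : ℂ)) * (k : ℂ) / (m : ℂ)) = ζ ^ k := by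
    intro k
    rw [hζ_def, ← Complex.exp_nat_mul]
    congr 1
    have h1 : ((j₁ : ℂ) - (j₂ : ℂ)) = (e : ℂ) := by
      push_cast [he_def, Nat.cast_sub hlt.le]; ring
    have h2 : (e : ℂ) * (s : ℂ) = ((e / g : ℕ) : ℂ) * (m : ℂ) := by
      have : e * s = (e / g) * m := by
        have h3 : g * (e / g) = e := Nat.mul_div_cancel' (hg_def ▸ Nat.gcd_dvd_right m e)
        have h4 : g * s = m := hs_def ▸ Nat.mul_div_cancel' hgm
        calc e * s = (g * (e / g)) * s := by rw [h3]
        _ = (e / g) * (g * s) := by ring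
        _ = (e / g) * m := by rw [h4]
      exact_mod_cast congrArg (Nat.cast : ℕ → ℂ) this
    have hm0 : (m : ℂ) ≠ 0 := Nat.cast_ne_zero.mpr hm.ne'
    have hs0' : (s : ℂ) ≠ 0 := Nat.cast_ne_zero.mpr hs0.ne'
    rw [h1]
    field_simp
    linear_combination (k:ℂ) * h2
  rw [Finset.sum_congr rfl fun k _ => hcast k]
  -- ζ^m = 1 and ζ ≠ 1
  have hsm : s ∣ m := hs_def ▸ Nat.div_dvd_of_dvd hgm
  have hζm : ζ ^ m = 1 := by
    obtain ⟨c, rfl⟩ := hsm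
    rw [pow_mul, hζ.pow_eq_one, one_pow]
  have hζ1 : ζ ≠ 1 := hζ.ne_one (lt_of_le_of_ne hs0 (Ne.symm hs1))
  -- tiling product
  have hprod : (∑ k ∈ K, ζ ^ k) * (∑ a ∈ A, ζ ^ a) = 0 := by
    calc (∑ k ∈ K, ζ ^ k) * (∑ a ∈ A, ζ ^ a)
        = ∑ q ∈ K ×ˢ A, ζ ^ (q.1 + q.2) := by
          rw [Finset.sum_mul_sum, ← Finset.sum_product']
          exact Finset.sum_congr rfl fun q _ => (pow_add ζ q.1 q.2).symm
      _ = ∑ r ∈ Finset.range m, ∑ q ∈ (K ×ˢ A).filter (fun q => (q.1 + q.2) % m = r), ζ ^ (q.1 + q.2) := by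
          exact (Finset.sum_fiberwise_of_maps_to (fun q _ => Finset.mem_range.mpr (Nat.mod_lt _ hm)) _).symm
      _ = ∑ r ∈ Finset.range m, ζ ^ r := by
          refine Finset.sum_congr rfl fun r hr => ?_
          have : ∀ q ∈ (K ×ˢ A).filter (fun q => (q.1 + q.2) % m = r), ζ ^ (q.1 + q.2) = ζ ^ r := by
            intro q hq
            have hqr : (q.1 + q.2) % m = r := (Finset.mem_filter.mp hq).2
            conv_lhs => rw [← Nat.div_add_mod (q.1 + q.2) m]
            rw [pow_add, pow_mul, hζm, one_pow, one_mul, hqr]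
          rw [Finset.sum_congr rfl this, Finset.sum_const, hA r hr, one_smul]
      _ = 0 := by
          rw [geom_sum_eq hζ1, hζm, sub_self, zero_div]
  -- A(ζ) ≠ 0
  have hAne : (∑ a ∈ A, ζ ^ a) ≠ 0 := by
    intro h0
    have hsmem : s ∈ (primSet m J).erase 1 := by
      refine Finset.mem_erase.mpr ⟨hs1, ?_⟩
      refine Finset.mem_image.mpr ⟨(j₁ : ℤ) - (j₂ : ℤ), ?_, ?_⟩
      · exact Finset.mem_image.mpr ⟨(j₁, j₂), Finset.mem_product.mpr ⟨h₁, h₂⟩, rfl⟩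
      · have : ((j₁ : ℤ) - (j₂ : ℤ)).natAbs = e := by omega
        rw [this, ← hg_def, ← hs_def]
    refine hdvd s hsmem ?_
    rw [cyclotomic_eq_minpoly hζ hs0]
    refine minpoly.isIntegrallyClosed_dvd (hζ.isIntegral hs0) ?_
    rw [map_sum]
    simpa using h0
  exact (mul_eq_zero.mp hprod).resolve_right hAne

theorem hadamard_of_tiling (m : ℕ) (hm : 0 < m) (J K : Finset ℕ)
    (hJ : J ⊆ Finset.range m) (hK : K ⊆ Finset.range m) (hcard : J.card = K.card)
    (A : Finset ℕ)
    (hA : ∀ r ∈ Finset.range m, ((K ×ˢ A).filter fun q => (q.1 + q.2) % m = r).card = 1)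
    (hdvd : ∀ s ∈ (primSet m J).erase 1,
      ¬ (Polynomial.cyclotomic s ℤ ∣ ∑ a ∈ A, Polynomial.X ^ a)) :
    IsHadamardSub m J K := by
  intro j₁ h₁ j₂ h₂ hne
  rcases lt_or_gt_of_ne hne with hlt | hlt
  · have h0 := key_sum m hm J K hJ A hA hdvd j₂ j₁ h₂ h₁ hlt
    have : ∀ k : ℕ, Complex.exp (2 * Real.pi * Complex.I * ((j₁ : ℂ) - (j₂ : ℂ)) * (k : ℂ) / (m : ℂ))
        = (starRingEnd ℂ) (Complex.exp (2 * Real.pi * Complex.I * ((j₂ : ℂ) - (j₁ : ℂ)) * (k : ℂ) / (m : ℂ))) := by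
      intro k
      rw [← Complex.exp_conj]
      congr 1
      simp [map_div₀, Complex.conj_I, map_ofNat]
      ring
    rw [Finset.sum_congr rfl fun k _ => this k, ← map_sum, h0, map_zero]
  · exact key_sum m hm J K hJ A hA hdvd j₁ j₂ h₁ h₂ hlt
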